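/- arXiv:2412.10952 — 3 statements merged into one kernel-verified Lean document; each statement's English description precedes it below -/
import Mathlib

section
/- Let D' ⊆ D'' be subcoalgebras of a coalgebra D satisfying Δ(D'') ⊆ D' ⊗ D'' + D'' ⊗ D'. Let f : D'' → A be a linear map into a unital associative algebra A. If the restriction of f to D' is convolution-invertible in Hom(D', A), then f is convolution-invertible in Hom(D'', A). -/
open TensorProduct

/-- The convolution product on `Hom_k(C, A)`. -/
noncomputable def conv {k : Type*} [Field k] {C A : Type*}
    [AddCommGroup C] [Module k C] [Coalgebra k C]
    [Ring A] [Algebra k A]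
    (f g : C →ₗ[k] A) : C →ₗ[k] A :=
  LinearMap.mul' k A ∘ₗ TensorProduct.map f g ∘ₗ Coalgebra.comul

/-- The convolution unit `c ↦ ε(c)·1_A`. -/
noncomputable def convUnit (k : Type*) [Field k] (C A : Type*)
    [AddCommGroup C] [Module k C] [Coalgebra k C]
    [Ring A] [Algebra k A] : C →ₗ[k] A :=
  Algebra.linearMap k A ∘ₗ (Coalgebra.counit : C →ₗ[k] k)

section Aux

variable {k : Type*} [Field k] {C A : Type*}
    [AddCommGroup C] [Module k C] [Coalgebra k C]
    [Ring A] [Algebra k A]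

lemma conv_assoc (f g h : C →ₗ[k] A) : conv (conv f g) h = conv f (conv g h) := by
  have e1 : TensorProduct.map (conv f g) h =
      (LinearMap.mul' k A).rTensor A ∘ₗ TensorProduct.map (TensorProduct.map f g) h ∘ₗ
        (Coalgebra.comul (R := k) (A := C)).rTensor C := by
    apply TensorProduct.ext'; intro x y
    simp [conv]
  have e2 : TensorProduct.map f (conv g h) =
      (LinearMap.mul' k A).lTensor A ∘ₗ TensorProduct.map f (TensorProduct.map g h) ∘ₗ
        (Coalgebra.comul (R := k) (A := C)).lTensor C := by
    apply TensorProduct.ext'; intro x y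
    simp [conv]
  have key : (LinearMap.mul' k A ∘ₗ (LinearMap.mul' k A).lTensor A ∘ₗ
        TensorProduct.map f (TensorProduct.map g h)) ∘ₗ
        (TensorProduct.assoc k C C C : (C ⊗[k] C) ⊗[k] C →ₗ[k] C ⊗[k] (C ⊗[k] C)) =
      LinearMap.mul' k A ∘ₗ (LinearMap.mul' k A).rTensor A ∘ₗ
        TensorProduct.map (TensorProduct.map f g) h := by
    apply TensorProduct.ext_threefold; intro x y z
    simp [mul_assoc]
  ext c
  show LinearMap.mul' k A ((TensorProduct.map (conv f g) h) (Coalgebra.comul c)) =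
    LinearMap.mul' k A ((TensorProduct.map f (conv g h)) (Coalgebra.comul c))
  rw [e1, e2]
  have hk := LinearMap.congr_fun key ((Coalgebra.comul (R := k) (A := C)).rTensor C
    (Coalgebra.comul c))
  simp only [LinearMap.comp_apply, LinearEquiv.coe_coe] at hk ⊢
  rw [← hk, Coalgebra.coassoc_apply]

lemma conv_unit_right (f : C →ₗ[k] A) : conv f (convUnit k C A) = f := by
  have e : TensorProduct.map f (convUnit k C A) =
      TensorProduct.map f (Algebra.linearMap k A) ∘ₗ
        (Coalgebra.counit (R := k) (A := C)).lTensor C := by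
    apply TensorProduct.ext'; intro x y
    simp [convUnit]
  ext c
  show LinearMap.mul' k A ((TensorProduct.map f (convUnit k C A)) (Coalgebra.comul c)) = f c
  rw [e]
  simp only [LinearMap.comp_apply, Coalgebra.lTensor_counit_comul]
  simp

lemma conv_unit_left (f : C →ₗ[k] A) : conv (convUnit k C A) f = f := by
  have e : TensorProduct.map (convUnit k C A) f =
      TensorProduct.map (Algebra.linearMap k A) f ∘ₗ
        (Coalgebra.counit (R := k) (A := C)).rTensor C := by
    apply TensorProduct.ext'; intro x y
    simp [convUnit]
  ext c
  show LinearMap.mul' k A ((TensorProduct.map (convUnit k C A) f) (Coalgebra.comul c)) = f c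
  rw [e]
  simp only [LinearMap.comp_apply, Coalgebra.rTensor_counit_comul]
  simp

lemma conv_add_left (f f' g : C →ₗ[k] A) : conv (f + f') g = conv f g + conv f' g := by
  ext c; simp [conv, TensorProduct.map_add_left]

lemma conv_add_right (f g g' : C →ₗ[k] A) : conv f (g + g') = conv f g + conv f g' := by
  ext c; simp [conv, TensorProduct.map_add_right]

lemma conv_sub_left (f f' g : C →ₗ[k] A) : conv (f - f') g = conv f g - conv f' g := by
  have : TensorProduct.map (f - f') g = TensorProduct.map f g - TensorProduct.map f' g := by
    apply TensorProduct.ext'; intro x y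
    simp [TensorProduct.sub_tmul]
  ext c; simp [conv, this]

lemma conv_sub_right (f g g' : C →ₗ[k] A) : conv f (g - g') = conv f g - conv f g' := by
  have : TensorProduct.map f (g - g') = TensorProduct.map f g - TensorProduct.map f g' := by
    apply TensorProduct.ext'; intro x y
    simp [TensorProduct.tmul_sub]
  ext c; simp [conv, this]

end Aux

lemma conv_sq_zero_right {k : Type*} [Field k] {C A : Type*}
    [AddCommGroup C] [Module k C] [Coalgebra k C]
    [Ring A] [Algebra k A] (n : C →ₗ[k] A) (h : conv n n = 0) :
    conv (convUnit k C A + n) (convUnit k C A - n) = convUnit k C A := by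
  rw [conv_add_left, conv_sub_right, conv_sub_right, conv_unit_left, conv_unit_left,
    conv_unit_right, h]
  abel

lemma conv_sq_zero_left {k : Type*} [Field k] {C A : Type*}
    [AddCommGroup C] [Module k C] [Coalgebra k C]
    [Ring A] [Algebra k A] (n : C →ₗ[k] A) (h : conv n n = 0) :
    conv (convUnit k C A - n) (convUnit k C A + n) = convUnit k C A := by
  rw [conv_add_right, conv_sub_left, conv_sub_left, conv_unit_right, conv_unit_right,
    conv_unit_left, h]
  abel


/-- Let `D' ⊆ D''` be subcoalgebras (realized by an injective coalgebra
morphism `ι : D' → D''`) with `Δ(D'') ⊆ D' ⊗ D'' + D'' ⊗ D'`. If the restriction of a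
linear map `f : D'' → A` to `D'` is convolution-invertible, then `f` is
convolution-invertible. -/
theorem takeuchi_step {k : Type*} [Field k] {D' D'' A : Type*}
    [AddCommGroup D'] [Module k D'] [Coalgebra k D']
    [AddCommGroup D''] [Module k D''] [Coalgebra k D'']
    [Ring A] [Algebra k A]
    (ι : D' →ₗc[k] D'') (hι : Function.Injective ι)
    (hext : ∀ c : D'', Coalgebra.comul (R := k) c ∈
      LinearMap.range (TensorProduct.map ι.toLinearMap (LinearMap.id : D'' →ₗ[k] D'')) ⊔
      LinearMap.range (TensorProduct.map (LinearMap.id : D'' →ₗ[k] D'') ι.toLinearMap))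
    (f : D'' →ₗ[k] A)
    (hf : ∃ g' : D' →ₗ[k] A,
      conv (f ∘ₗ ι.toLinearMap) g' = convUnit k D' A ∧
      conv g' (f ∘ₗ ι.toLinearMap) = convUnit k D' A) :
    ∃ g : D'' →ₗ[k] A, conv f g = convUnit k D'' A ∧ conv g f = convUnit k D'' A := by
  obtain ⟨g', hg1, hg2⟩ := hf
  -- a linear retraction π of ι
  obtain ⟨π, hπ⟩ := ι.toLinearMap.exists_leftInverse_of_injective
    (LinearMap.ker_eq_bot.mpr hι)
  set h : D'' →ₗ[k] A := g' ∘ₗ π with hh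
  have hhι : h ∘ₗ ι.toLinearMap = g' := by
    rw [hh, LinearMap.comp_assoc, hπ, LinearMap.comp_id]
  -- restriction of convolution along the coalgebra hom ι
  have hres : ∀ u v : D'' →ₗ[k] A, (conv u v) ∘ₗ ι.toLinearMap =
      conv (u ∘ₗ ι.toLinearMap) (v ∘ₗ ι.toLinearMap) := by
    intro u v
    have hc : TensorProduct.map u v ∘ₗ TensorProduct.map ι.toLinearMap ι.toLinearMap =
        TensorProduct.map (u ∘ₗ ι.toLinearMap) (v ∘ₗ ι.toLinearMap) :=
      (TensorProduct.map_comp u v ι.toLinearMap ι.toLinearMap).symm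
    ext d
    have h2 := LinearMap.congr_fun hc (Coalgebra.comul (R := k) d)
    simp only [LinearMap.comp_apply] at h2
    show LinearMap.mul' k A ((TensorProduct.map u v) (Coalgebra.comul (ι d))) =
      LinearMap.mul' k A ((TensorProduct.map (u ∘ₗ ι.toLinearMap) (v ∘ₗ ι.toLinearMap))
        (Coalgebra.comul d))
    rw [← CoalgHomClass.map_comp_comul_apply ι d]
    exact congrArg (LinearMap.mul' k A) h2
  have hunitres : (convUnit k D'' A) ∘ₗ ι.toLinearMap = convUnit k D' A := by
    ext d
    simp [convUnit, CoalgHomClass.counit_comp_apply]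
  -- convolution of two maps vanishing on D' is zero
  have hvanish : ∀ u v : D'' →ₗ[k] A, u ∘ₗ ι.toLinearMap = 0 → v ∘ₗ ι.toLinearMap = 0 →
      conv u v = 0 := by
    intro u v hu hv
    ext c
    obtain ⟨x, hx, y, hy, hxy⟩ := Submodule.mem_sup.mp (hext c)
    obtain ⟨x', rfl⟩ := hx
    obtain ⟨y', rfl⟩ := hy
    show LinearMap.mul' k A ((TensorProduct.map u v) (Coalgebra.comul c)) = 0
    rw [← hxy, map_add, map_add]
    rw [← LinearMap.comp_apply (TensorProduct.map u v), ← TensorProduct.map_comp,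
      ← LinearMap.comp_apply (TensorProduct.map u v), ← TensorProduct.map_comp,
      hu, hv, LinearMap.comp_id, LinearMap.comp_id]
    simp
  have hnι : (conv f h - convUnit k D'' A) ∘ₗ ι.toLinearMap = 0 := by
    rw [LinearMap.sub_comp, hres, hhι, hg1, hunitres, sub_self]
  have hmι : (conv h f - convUnit k D'' A) ∘ₗ ι.toLinearMap = 0 := by
    rw [LinearMap.sub_comp, hres, hhι, hg2, hunitres, sub_self]
  have hnn := hvanish _ _ hnι hnι
  have hmm := hvanish _ _ hmι hmι
  -- right inverse
  have hfr : conv f (conv h (convUnit k D'' A - (conv f h - convUnit k D'' A))) =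
      convUnit k D'' A := by
    have key := conv_sq_zero_right (conv f h - convUnit k D'' A) hnn
    have e1 : convUnit k D'' A + (conv f h - convUnit k D'' A) = conv f h := by abel
    rw [e1] at key
    rw [← conv_assoc, key]
  -- left inverse
  have hlf : conv (conv (convUnit k D'' A - (conv h f - convUnit k D'' A)) h) f =
      convUnit k D'' A := by
    have key := conv_sq_zero_left (conv h f - convUnit k D'' A) hmm
    have e1 : convUnit k D'' A + (conv h f - convUnit k D'' A) = conv h f := by abel
    rw [e1] at key
    rw [conv_assoc, key]
  -- left inverse equals right inverse
  have hlr : conv (convUnit k D'' A - (conv h f - convUnit k D'' A)) h =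
      conv h (convUnit k D'' A - (conv f h - convUnit k D'' A)) := by
    calc conv (convUnit k D'' A - (conv h f - convUnit k D'' A)) h
        = conv (conv (convUnit k D'' A - (conv h f - convUnit k D'' A)) h)
            (convUnit k D'' A) := (conv_unit_right _).symm
      _ = conv (conv (convUnit k D'' A - (conv h f - convUnit k D'' A)) h)
            (conv f (conv h (convUnit k D'' A - (conv f h - convUnit k D'' A)))) := by
          rw [hfr]
      _ = conv (conv (conv (convUnit k D'' A - (conv h f - convUnit k D'' A)) h) f)
            (conv h (convUnit k D'' A - (conv f h - convUnit k D'' A))) :=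
          (conv_assoc _ _ _).symm
      _ = conv h (convUnit k D'' A - (conv f h - convUnit k D'' A)) := by
          rw [hlf, conv_unit_left]
  exact ⟨conv h (convUnit k D'' A - (conv f h - convUnit k D'' A)), hfr,
    by rw [← hlr, hlf]⟩
end

section
/- Let C be a coalgebra with filtration {C_n}, λ : C → C_0 a linear retraction of the inclusion ι : C_0 → C, and φ = ι∘λ. For c ∈ C_{n+1} and p ≥ 1, the element Σ_{i=1}^{p} φ_i(Δ^{p-1}(c)) − Δ^{p-1}(c) lies in C_n^{⊗p}, where φ_i = φ^{⊗(i−1)} ⊗ id_C ⊗ φ^{⊗(p−i)}. -/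
open TensorProduct PiTensorProduct

variable {k : Type*} [Field k] {C : Type*} [AddCommGroup C] [Module k C] [Coalgebra k C]

/-- Cast between tensor powers of equal exponent. -/
noncomputable def tcast {a b : ℕ} (h : a = b) :
    (⨂[k] (_ : Fin a), C) ≃ₗ[k] ⨂[k] (_ : Fin b), C :=
  PiTensorProduct.reindex k (fun _ => C) (finCongr h)

/-- The equivalence `C^{⊗1} ≃ C`. -/
noncomputable def oneEquiv : (⨂[k] (_ : Fin 1), C) ≃ₗ[k] C :=
  PiTensorProduct.subsingletonEquiv 0

/-- Gluing of tensor powers: `C^{⊗a} ⊗ C^{⊗b} ≃ C^{⊗(a+b)}`. -/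
noncomputable def glue (a b : ℕ) :
    ((⨂[k] (_ : Fin a), C) ⊗[k] (⨂[k] (_ : Fin b), C)) ≃ₗ[k] ⨂[k] (_ : Fin (a + b)), C :=
  (PiTensorProduct.tmulEquiv k C).trans (PiTensorProduct.reindex k (fun _ => C) finSumFinEquiv)

/-- The iterated comultiplication `Δ^p : C → C^{⊗(p+1)}` (so `deltaIter 0` is the
canonical identification `C ≃ C^{⊗1}` and `deltaIter 1` is `Δ`). -/
noncomputable def deltaIter : ∀ p : ℕ, C →ₗ[k] ⨂[k] (_ : Fin (p + 1)), C
  | 0 => (oneEquiv (k := k) (C := C)).symm.toLinearMap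
  | p + 1 =>
    (tcast (by omega)).toLinearMap ∘ₗ (glue 1 (p + 1)).toLinearMap ∘ₗ
      (TensorProduct.map (oneEquiv (k := k) (C := C)).symm.toLinearMap (deltaIter p)) ∘ₗ
        Coalgebra.comul

/-- `φ_i = φ^{⊗(i-1)} ⊗ id_C ⊗ φ^{⊗(p-i)}` acting on `C^{⊗p}`. -/
noncomputable def phiMap (φ : C →ₗ[k] C) (p : ℕ) (i : Fin p) :
    (⨂[k] (_ : Fin p), C) →ₗ[k] ⨂[k] (_ : Fin p), C :=
  PiTensorProduct.map (fun j => if j = i then LinearMap.id else φ)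

/-- The subspace `C_n^{⊗p} ⊆ C^{⊗p}`. -/
noncomputable def powerSub (F : ℕ → Submodule k C) (n p : ℕ) :
    Submodule k (⨂[k] (_ : Fin p), C) :=
  LinearMap.range (PiTensorProduct.map (fun _ : Fin p => (F n).subtype))

set_option linter.unusedSectionVars false
set_option linter.unusedVariables false

-- auxiliary lemmas

lemma oneEquiv_symm_apply (x : C) : (oneEquiv (k := k)).symm x = tprod k (fun _ : Fin 1 => x) := by
  apply (oneEquiv (k := k) (C := C)).injective
  simp [oneEquiv]

lemma tprod_mem_powerSub {F : ℕ → Submodule k C} {n p : ℕ} {v : Fin p → C}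
    (h : ∀ i, v i ∈ F n) : tprod k v ∈ powerSub F n p :=
  ⟨tprod k (fun i => ⟨v i, h i⟩), by simp [PiTensorProduct.map_tprod]⟩

lemma powerSub_ind {F : ℕ → Submodule k C} {n p : ℕ} {M : Type*} [AddCommGroup M] [Module k M]
    {T : (⨂[k] (_ : Fin p), C) →ₗ[k] M} {Q : Submodule k M}
    (H : ∀ v : Fin p → C, (∀ i, v i ∈ F n) → T (tprod k v) ∈ Q) :
    ∀ y ∈ powerSub F n p, T y ∈ Q := by
  rintro _ ⟨y, rfl⟩
  induction y using PiTensorProduct.induction_on with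
  | smul_tprod r w =>
      rw [map_smul, PiTensorProduct.map_tprod, map_smul]
      exact Q.smul_mem r (by simpa using H (fun i => (w i : C)) (fun i => (w i).2))
  | add x y hx hy =>
      rw [map_add, map_add]; exact Q.add_mem hx hy

lemma powerSub_mono {F : ℕ → Submodule k C} (hmono : Monotone F) {m n : ℕ} (h : m ≤ n) (p : ℕ) :
    powerSub F m p ≤ powerSub F n p := by
  intro y hy
  exact powerSub_ind (T := LinearMap.id) (fun v hv => tprod_mem_powerSub (fun i => hmono h (hv i))) y hy

lemma phiMap_tprod (φ : C →ₗ[k] C) (p : ℕ) (i : Fin p) (v : Fin p → C) :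
    phiMap φ p i (tprod k v) = tprod k (fun j => if j = i then v j else φ (v j)) := by
  rw [phiMap, PiTensorProduct.map_tprod]
  congr 1; funext j; by_cases h : j = i <;> simp [h]

/-- The gluing map `C ⊗ C^{⊗(q+1)} → C^{⊗(q+2)}`. -/
noncomputable def Gl (q : ℕ) : (C ⊗[k] (⨂[k] (_ : Fin (q + 1)), C)) →ₗ[k] ⨂[k] (_ : Fin (q + 2)), C :=
  (tcast (by omega)).toLinearMap ∘ₗ (glue 1 (q + 1)).toLinearMap ∘ₗ
    TensorProduct.map (oneEquiv (k := k) (C := C)).symm.toLinearMap LinearMap.id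

lemma Gl_tmul_tprod (q : ℕ) (x : C) (v : Fin (q + 1) → C) :
    Gl q (x ⊗ₜ[k] tprod k v) = tprod k (Fin.cases x v) := by
  rw [Gl]
  simp only [LinearMap.comp_apply, LinearEquiv.coe_coe, TensorProduct.map_tmul,
    LinearMap.id_apply, oneEquiv_symm_apply, glue, LinearEquiv.trans_apply,
    PiTensorProduct.tmulEquiv_apply, PiTensorProduct.reindex_tprod, tcast,
    PiTensorProduct.reindex_tprod]
  congr 1
  funext j
  induction j using Fin.cases with
  | zero => rfl
  | succ i =>
      show Sum.elim _ v (finSumFinEquiv.symm ((finCongr _).symm i.succ)) = v i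
      have : (finCongr (by omega : 1 + (q+1) = q + 2)).symm i.succ
          = finSumFinEquiv (Sum.inr i) := by
        ext
        simp [Fin.val_succ]
        omega
      rw [this, Equiv.symm_apply_apply]
      rfl

lemma map_comp_Gl (q : ℕ) (f : Fin (q + 2) → (C →ₗ[k] C)) :
    (PiTensorProduct.map f) ∘ₗ Gl (k := k) q =
      Gl q ∘ₗ TensorProduct.map (f 0) (PiTensorProduct.map (fun j => f j.succ)) := by
  ext x v
  simp only [LinearMap.comp_apply, AlgebraTensorModule.curry_apply, curry_apply,
    LinearMap.coe_restrictScalars, LinearMap.compMultilinearMap_apply,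
    TensorProduct.map_tmul, Gl_tmul_tprod, PiTensorProduct.map_tprod]
  congr 1
  funext j
  induction j using Fin.cases with
  | zero => rfl
  | succ i => rfl

lemma deltaIter_succ_eq (q : ℕ) :
    (deltaIter (q + 1) : C →ₗ[k] _) =
      Gl q ∘ₗ TensorProduct.map LinearMap.id (deltaIter q) ∘ₗ Coalgebra.comul := by
  rw [deltaIter, Gl]
  ext c
  simp only [LinearMap.comp_apply]
  congr 2
  rw [← LinearMap.comp_apply (TensorProduct.map _ LinearMap.id), ← TensorProduct.map_comp]
  simp

lemma Gl_tmul_mem {F : ℕ → Submodule k C} {m q : ℕ} {x : C} (hx : x ∈ F m) :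
    ∀ y ∈ powerSub F m (q + 1), Gl q (x ⊗ₜ[k] y) ∈ powerSub F m (q + 2) := by
  apply powerSub_ind (T := (Gl q) ∘ₗ TensorProduct.mk k _ _ x)
  intro v hv
  simp only [LinearMap.comp_apply, TensorProduct.mk_apply, Gl_tmul_tprod]
  apply tprod_mem_powerSub
  intro i
  induction i using Fin.cases with
  | zero => exact hx
  | succ j => exact hv j

lemma sum_submodule_le {ι M : Type*} [AddCommGroup M] [Module k M] {s : Finset ι}
    {Q : ι → Submodule k M} {P : Submodule k M} (h : ∀ i ∈ s, Q i ≤ P) :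
    ∀ x ∈ ∑ i ∈ s, Q i, x ∈ P := by
  classical
  induction s using Finset.induction_on with
  | empty =>
      intro x hx
      rw [Finset.sum_empty, Submodule.zero_eq_bot, Submodule.mem_bot] at hx
      rw [hx]; exact P.zero_mem
  | @insert a s hns ih =>
      intro x hx
      rw [Finset.sum_insert hns, Submodule.add_eq_sup, Submodule.mem_sup] at hx
      obtain ⟨y, hy, z, hz, rfl⟩ := hx
      exact P.add_mem (h a (Finset.mem_insert_self a s) hy)
        (ih (fun i hi => h i (Finset.mem_insert_of_mem hi)) z hz)

lemma deltaIter_mem {F : ℕ → Submodule k C} (hmono : Monotone F)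
    (hfilt : ∀ m : ℕ, ∀ c ∈ F m, Coalgebra.comul (R := k) c ∈
      ∑ i ∈ Finset.range (m + 1),
        LinearMap.range (TensorProduct.map (F i).subtype (F (m - i)).subtype)) :
    ∀ q m : ℕ, ∀ b ∈ F m, deltaIter q b ∈ powerSub F m (q + 1) := by
  intro q
  induction q with
  | zero =>
      intro m b hb
      rw [deltaIter]
      simp only [LinearEquiv.coe_coe, oneEquiv_symm_apply]
      exact tprod_mem_powerSub (fun _ => hb)
  | succ q ih =>
      intro m b hb
      rw [deltaIter_succ_eq]
      simp only [LinearMap.comp_apply]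
      have hsum := hfilt m b hb
      set P : Submodule k (C ⊗[k] C) :=
        Submodule.comap ((Gl q) ∘ₗ TensorProduct.map LinearMap.id (deltaIter q))
          (powerSub F m (q + 2)) with hP
      have hle : ∀ i ∈ Finset.range (m + 1),
          LinearMap.range (TensorProduct.map (F i).subtype (F (m - i)).subtype) ≤ P := by
        intro i hi
        rw [Finset.mem_range] at hi
        rintro _ ⟨z, rfl⟩
        induction z using TensorProduct.induction_on with
        | zero => simp only [map_zero]; exact P.zero_mem
        | tmul a c =>
            simp only [hP, Submodule.mem_comap, TensorProduct.map_tmul, LinearMap.comp_apply,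
              Submodule.coe_subtype, LinearMap.id_apply]
            exact Gl_tmul_mem (hmono (by omega : (i : ℕ) ≤ m) a.2) _
              (ih m (c : C) (hmono (by omega : m - i ≤ m) c.2))
        | add z w hz hw => rw [map_add]; exact P.add_mem hz hw
      exact sum_submodule_le hle _ hsum

lemma phiMap_mem_powerSub {F : ℕ → Submodule k C} (hmono : Monotone F)
    {φ : C →ₗ[k] C} (hφ_mem : ∀ x : C, φ x ∈ F 0) {n p : ℕ} (i : Fin p) :
    ∀ y ∈ powerSub F n p, phiMap φ p i y ∈ powerSub F n p := by
  apply powerSub_ind (T := phiMap φ p i)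
  intro v hv
  rw [phiMap_tprod]
  apply tprod_mem_powerSub
  intro j
  by_cases h : j = i
  · simpa [h] using hv j
  · simpa [h] using hmono (Nat.zero_le n) (hφ_mem (v j))

lemma phiMap_fix {F : ℕ → Submodule k C}
    {φ : C →ₗ[k] C} (hφ_id : ∀ x ∈ F 0, φ x = x) {p : ℕ} (i : Fin p) :
    ∀ y ∈ powerSub F 0 p, phiMap φ p i y = y := by
  rintro _ ⟨y, rfl⟩
  induction y using PiTensorProduct.induction_on with
  | smul_tprod r w =>
      rw [map_smul, PiTensorProduct.map_tprod, map_smul, phiMap_tprod]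
      congr 2
      funext j
      by_cases h : j = i <;> simp [h, hφ_id _ (w j).2]
  | add x y hx hy => rw [map_add, map_add, hx, hy]

lemma phipow_mem {F : ℕ → Submodule k C} {φ : C →ₗ[k] C} (hφ_mem : ∀ x : C, φ x ∈ F 0)
    {p : ℕ} (z : ⨂[k] (_ : Fin p), C) :
    PiTensorProduct.map (fun _ : Fin p => φ) z ∈ powerSub F 0 p := by
  induction z using PiTensorProduct.induction_on with
  | smul_tprod r w =>
      rw [map_smul, PiTensorProduct.map_tprod]
      exact Submodule.smul_mem _ r (tprod_mem_powerSub (fun i => hφ_mem (w i)))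
  | add x y hx hy => rw [map_add]; exact Submodule.add_mem _ hx hy

lemma phipow_fix {F : ℕ → Submodule k C} {φ : C →ₗ[k] C} (hφ_id : ∀ x ∈ F 0, φ x = x) {p : ℕ} :
    ∀ y ∈ powerSub F 0 p, PiTensorProduct.map (fun _ : Fin p => φ) y = y := by
  rintro _ ⟨y, rfl⟩
  induction y using PiTensorProduct.induction_on with
  | smul_tprod r w =>
      rw [map_smul, PiTensorProduct.map_tprod, map_smul, PiTensorProduct.map_tprod]
      congr 2
      funext j
      simp [hφ_id _ (w j).2]
  | add x y hx hy => rw [map_add, map_add, hx, hy]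

lemma phiMap_zero_Gl (φ : C →ₗ[k] C) (q : ℕ) :
    phiMap φ (q + 2) 0 ∘ₗ Gl (k := k) q =
      Gl q ∘ₗ TensorProduct.map LinearMap.id (PiTensorProduct.map (fun _ : Fin (q + 1) => φ)) := by
  rw [phiMap, map_comp_Gl]
  have h1 : (if (0 : Fin (q + 2)) = 0 then (LinearMap.id : C →ₗ[k] C) else φ) = LinearMap.id :=
    if_pos rfl
  have h2 : (fun j : Fin (q + 1) => if j.succ = (0 : Fin (q + 2)) then (LinearMap.id : C →ₗ[k] C)
      else φ) = fun _ => φ := by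
    funext j; simp [Fin.succ_ne_zero]
  rw [h1, h2]

lemma phiMap_succ_Gl (φ : C →ₗ[k] C) (q : ℕ) (i : Fin (q + 1)) :
    phiMap φ (q + 2) i.succ ∘ₗ Gl (k := k) q =
      Gl q ∘ₗ TensorProduct.map φ (phiMap φ (q + 1) i) := by
  rw [phiMap, map_comp_Gl]
  have h1 : (if (0 : Fin (q + 2)) = i.succ then (LinearMap.id : C →ₗ[k] C) else φ) = φ :=
    if_neg (fun h => Fin.succ_ne_zero i h.symm)
  have h2 : (fun j : Fin (q + 1) => if j.succ = i.succ then (LinearMap.id : C →ₗ[k] C) else φ)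
      = fun j => if j = i then (LinearMap.id : C →ₗ[k] C) else φ := by
    funext j; simp [Fin.succ_inj]
  rw [h1, h2]
  rfl

lemma key_expand (φ : C →ₗ[k] C) (q : ℕ) (a : C) (y : ⨂[k] (_ : Fin (q + 1)), C) :
    (∑ j : Fin (q + 2), phiMap φ (q + 2) j (Gl q (a ⊗ₜ[k] y))) - Gl q (a ⊗ₜ[k] y)
      = Gl q (a ⊗ₜ[k] PiTensorProduct.map (fun _ : Fin (q + 1) => φ) y)
        + (∑ j : Fin (q + 1), Gl q (φ a ⊗ₜ[k] phiMap φ (q + 1) j y))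
        - Gl q (a ⊗ₜ[k] y) := by
  congr 1
  rw [Fin.sum_univ_succ]
  congr 1
  · have := LinearMap.congr_fun (phiMap_zero_Gl φ q) (a ⊗ₜ[k] y)
    simpa using this
  · apply Finset.sum_congr rfl
    intro j _
    have := LinearMap.congr_fun (phiMap_succ_Gl φ q j) (a ⊗ₜ[k] y)
    simpa using this

/-- Let `{C_n}` be a coalgebra filtration of `C`, `λ` a linear retraction of
the inclusion `C_0 ⊆ C` and `φ = ι ∘ λ`. For `c ∈ C_{n+1}` and `p = q + 1 ≥ 1`, the
element `Σ_{i=1}^{p} φ_i(Δ^{p-1}(c)) − Δ^{p-1}(c)` lies in `C_n^{⊗p}`. -/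
theorem phi_sum_sub_deltaIter_mem {k : Type*} [Field k] {C : Type*}
    [AddCommGroup C] [Module k C] [Coalgebra k C]
    (F : ℕ → Submodule k C)
    (hmono : Monotone F)
    (hexh : ⨆ n, F n = ⊤)
    (hfilt : ∀ m : ℕ, ∀ c ∈ F m, Coalgebra.comul (R := k) c ∈
      ∑ i ∈ Finset.range (m + 1),
        LinearMap.range (TensorProduct.map (F i).subtype (F (m - i)).subtype))
    (φ : C →ₗ[k] C)
    (hφ_mem : ∀ x : C, φ x ∈ F 0)
    (hφ_id : ∀ x ∈ F 0, φ x = x)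
    (n q : ℕ) :
    ∀ c ∈ F (n + 1),
      (∑ i : Fin (q + 1), phiMap φ (q + 1) i (deltaIter q c)) - deltaIter q c ∈
        powerSub F n (q + 1) := by
  induction q with
  | zero =>
      intro c hc
      have h1 : phiMap φ 1 (0 : Fin 1) = LinearMap.id := by
        rw [phiMap]
        have : (fun j : Fin 1 => if j = 0 then (LinearMap.id : C →ₗ[k] C) else φ)
            = fun _ => (LinearMap.id : C →ₗ[k] C) := by
          funext j; simp [Subsingleton.elim j 0]
        rw [this, PiTensorProduct.map_id]
      rw [Fin.sum_univ_one, h1]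
      simp only [LinearMap.id_apply, sub_self]
      exact Submodule.zero_mem _
  | succ q ih =>
      intro c hc
      set M : C ⊗[k] C →ₗ[k] ⨂[k] (_ : Fin (q + 2)), C :=
        ((∑ i : Fin (q + 2), phiMap φ (q + 2) i) - LinearMap.id) ∘ₗ Gl q ∘ₗ
          TensorProduct.map LinearMap.id (deltaIter q) with hMdef
      have hgoal : (∑ i : Fin (q + 1 + 1), phiMap φ (q + 1 + 1) i (deltaIter (q + 1) c)) -
          deltaIter (q + 1) c = M (Coalgebra.comul c) := by
        rw [deltaIter_succ_eq]
        simp [hMdef, LinearMap.sum_apply]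
      rw [hgoal]
      refine sum_submodule_le (P := Submodule.comap M (powerSub F n (q + 2))) ?_ _
        (hfilt (n + 1) c hc)
      intro i hi
      rw [Finset.mem_range] at hi
      rintro _ ⟨z, rfl⟩
      induction z using TensorProduct.induction_on with
      | zero => rw [map_zero]; exact Submodule.zero_mem _
      | add z w hz hw => rw [map_add]; exact Submodule.add_mem _ hz hw
      | tmul ap bp =>
          obtain ⟨a, ha⟩ := ap; obtain ⟨b, hb⟩ := bp
          simp only [TensorProduct.map_tmul, Submodule.coe_subtype, Submodule.mem_comap]
          have hMab : M (a ⊗ₜ[k] b) =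
              (∑ j : Fin (q + 2), phiMap φ (q + 2) j (Gl q (a ⊗ₜ[k] deltaIter q b)))
                - Gl q (a ⊗ₜ[k] deltaIter q b) := by
            simp [hMdef, LinearMap.sum_apply]
          rw [hMab, key_expand]
          by_cases hi0 : i = 0
          · -- a ∈ F 0, b ∈ F (n+1)
            subst hi0
            have ha0 : a ∈ F 0 := ha
            have hbn : b ∈ F (n + 1) := by simpa using hb
            have hsplit : Gl q (a ⊗ₜ[k] PiTensorProduct.map (fun _ : Fin (q + 1) => φ)
                  (deltaIter q b))
                + (∑ j : Fin (q + 1), Gl q (φ a ⊗ₜ[k] phiMap φ (q + 1) j (deltaIter q b)))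
                - Gl q (a ⊗ₜ[k] deltaIter q b)
                = Gl q (a ⊗ₜ[k] PiTensorProduct.map (fun _ : Fin (q + 1) => φ) (deltaIter q b))
                  + Gl q (a ⊗ₜ[k]
                    ((∑ j : Fin (q + 1), phiMap φ (q + 1) j (deltaIter q b)) - deltaIter q b)) := by
              rw [hφ_id a ha0, TensorProduct.tmul_sub, map_sub, TensorProduct.tmul_sum, map_sum]
              abel
            rw [hsplit]
            refine Submodule.add_mem _ ?_ ?_
            · exact Gl_tmul_mem (hmono (Nat.zero_le n) ha0) _
                (powerSub_mono hmono (Nat.zero_le n) _ (phipow_mem hφ_mem _))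
            · exact Gl_tmul_mem (hmono (Nat.zero_le n) ha0) _ (ih b hbn)
          · by_cases hin : i = n + 1
            · -- a ∈ F (n+1), b ∈ F 0
              subst hin
              have hb0 : b ∈ F 0 := by rwa [Nat.sub_self] at hb
              have hd0 : deltaIter q b ∈ powerSub F 0 (q + 1) :=
                deltaIter_mem hmono hfilt q 0 b hb0
              rw [phipow_fix hφ_id _ hd0]
              have hfix : ∀ j : Fin (q + 1),
                  phiMap φ (q + 1) j (deltaIter q b) = deltaIter q b :=
                fun j => phiMap_fix hφ_id j _ hd0
              simp only [hfix]
              rw [add_sub_cancel_left]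
              refine Submodule.sum_mem _ (fun j _ => ?_)
              exact Gl_tmul_mem (hmono (Nat.zero_le n) (hφ_mem a)) _
                (powerSub_mono hmono (Nat.zero_le n) _ hd0)
            · -- 1 ≤ i ≤ n : both in F n
              have han : a ∈ F n := hmono (by omega) ha
              have hbn : b ∈ F n := hmono (by omega : n + 1 - i ≤ n) hb
              have hdb : deltaIter q b ∈ powerSub F n (q + 1) :=
                deltaIter_mem hmono hfilt q n b hbn
              refine Submodule.sub_mem _ (Submodule.add_mem _ ?_ ?_) ?_
              · exact Gl_tmul_mem han _
                  (powerSub_mono hmono (Nat.zero_le n) _ (phipow_mem hφ_mem _))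
              · refine Submodule.sum_mem _ (fun j _ => ?_)
                exact Gl_tmul_mem (hmono (Nat.zero_le n) (hφ_mem a)) _
                  (phiMap_mem_powerSub hmono hφ_mem j _ hdb)
              · exact Gl_tmul_mem han _ hdb
end

section
/- Let ι : C → C̃ be an injective coalgebra morphism satisfying Δ_{C̃}(C̃) ⊆ C̃ ⊗ ι(C) + ι(C) ⊗ C̃, let λ be a normalized linear retraction of ι (ε_C ∘ λ = ε_{C̃}), p : C̃ → X := coker(ι) the projection, and ω : X → C ⊗ C the unique linear map with ω ∘ p = (λ ⊗ λ) ∘ Δ_{C̃} − Δ_C ∘ λ. Then ω is a normalized 2-cocycle: (C⊗ω)∘ρ_l − (Δ_C⊗C)∘ω + (C⊗Δ_C)∘ω − (ω⊗C)∘ρ_r = 0, where ρ_r and ρ_l are the induced right and left C-coactions on X. -/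
open TensorProduct
private lemma map_sub_right {k M N P Q : Type*} [CommRing k]
    [AddCommGroup M] [AddCommGroup N] [AddCommGroup P] [AddCommGroup Q]
    [Module k M] [Module k N] [Module k P] [Module k Q]
    (f : M →ₗ[k] P) (g h : N →ₗ[k] Q) :
    TensorProduct.map f (g - h) = TensorProduct.map f g - TensorProduct.map f h := by
  apply TensorProduct.ext'
  intro x y
  simp [tmul_sub]

private lemma map_sub_left {k M N P Q : Type*} [CommRing k]
    [AddCommGroup M] [AddCommGroup N] [AddCommGroup P] [AddCommGroup Q]
    [Module k M] [Module k N] [Module k P] [Module k Q]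
    (g h : M →ₗ[k] P) (f : N →ₗ[k] Q) :
    TensorProduct.map (g - h) f = TensorProduct.map g f - TensorProduct.map h f := by
  apply TensorProduct.ext'
  intro x y
  simp [sub_tmul]

private lemma lid_nat {k M N : Type*} [CommRing k] [AddCommGroup M] [AddCommGroup N]
    [Module k M] [Module k N] (f : M →ₗ[k] N) :
    (TensorProduct.lid k N).toLinearMap ∘ₗ LinearMap.lTensor k f
      = f ∘ₗ (TensorProduct.lid k M).toLinearMap := by
  apply TensorProduct.ext'
  intro r m
  simp

private lemma rid_nat {k M N : Type*} [CommRing k] [AddCommGroup M] [AddCommGroup N]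
    [Module k M] [Module k N] (f : M →ₗ[k] N) :
    (TensorProduct.rid k N).toLinearMap ∘ₗ LinearMap.rTensor k f
      = f ∘ₗ (TensorProduct.rid k M).toLinearMap := by
  apply TensorProduct.ext'
  intro m r
  simp

private lemma lid_mk {k M : Type*} [CommRing k] [AddCommGroup M] [Module k M] :
    (TensorProduct.lid k M).toLinearMap ∘ₗ TensorProduct.mk k k M 1 = LinearMap.id := by
  ext m; simp

private lemma rid_mk {k M : Type*} [CommRing k] [AddCommGroup M] [Module k M] :
    (TensorProduct.rid k M).toLinearMap ∘ₗ (TensorProduct.mk k M k).flip 1 = LinearMap.id := by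
  ext m; simp
/-- For a coalgebra extension `ι : C → C̃` (injective with
`Δ(C̃) ⊆ C̃ ⊗ ι(C) + ι(C) ⊗ C̃`), a normalized linear retraction `λ` of `ι`, the quotient
`X = coker ι` with its induced coactions `ρ_r`, `ρ_l`, the map `ω : X → C ⊗ C` with
`ω ∘ p = (λ⊗λ)∘Δ_{C̃} − Δ_C∘λ` is a normalized 2-cocycle. -/
theorem extension_two_cocycle {k : Type*} [Field k] {C Ct : Type*}
    [AddCommGroup C] [Module k C] [Coalgebra k C]
    [AddCommGroup Ct] [Module k Ct] [Coalgebra k Ct]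
    (ι : C →ₗc[k] Ct) (hι : Function.Injective ι)
    (hext : ∀ z : Ct, Coalgebra.comul (R := k) z ∈
      LinearMap.range (TensorProduct.map (LinearMap.id : Ct →ₗ[k] Ct) ι.toLinearMap) ⊔
      LinearMap.range (TensorProduct.map ι.toLinearMap (LinearMap.id : Ct →ₗ[k] Ct)))
    (lam : Ct →ₗ[k] C)
    (hlam : lam ∘ₗ ι.toLinearMap = LinearMap.id)
    (hnorm : (Coalgebra.counit : C →ₗ[k] k) ∘ₗ lam = (Coalgebra.counit : Ct →ₗ[k] k))
    (ρr : (Ct ⧸ LinearMap.range ι.toLinearMap) →ₗ[k]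
      (Ct ⧸ LinearMap.range ι.toLinearMap) ⊗[k] C)
    (hρr : ρr ∘ₗ (LinearMap.range ι.toLinearMap).mkQ =
      TensorProduct.map (LinearMap.range ι.toLinearMap).mkQ lam ∘ₗ Coalgebra.comul)
    (ρl : (Ct ⧸ LinearMap.range ι.toLinearMap) →ₗ[k]
      C ⊗[k] (Ct ⧸ LinearMap.range ι.toLinearMap))
    (hρl : ρl ∘ₗ (LinearMap.range ι.toLinearMap).mkQ =
      TensorProduct.map lam (LinearMap.range ι.toLinearMap).mkQ ∘ₗ Coalgebra.comul)
    (ω : (Ct ⧸ LinearMap.range ι.toLinearMap) →ₗ[k] C ⊗[k] C)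
    (hω : ω ∘ₗ (LinearMap.range ι.toLinearMap).mkQ =
      TensorProduct.map lam lam ∘ₗ Coalgebra.comul -
        (Coalgebra.comul : C →ₗ[k] C ⊗[k] C) ∘ₗ lam) :
    -- the 2-cocycle condition
    (LinearMap.lTensor C ω) ∘ₗ ρl
      - (TensorProduct.assoc k C C C).toLinearMap ∘ₗ
          (LinearMap.rTensor C (Coalgebra.comul : C →ₗ[k] C ⊗[k] C)) ∘ₗ ω
      + (LinearMap.lTensor C (Coalgebra.comul : C →ₗ[k] C ⊗[k] C)) ∘ₗ ω
      - (TensorProduct.assoc k C C C).toLinearMap ∘ₗ (LinearMap.rTensor C ω) ∘ₗ ρr = 0 ∧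
    -- normalization
    (TensorProduct.lid k C).toLinearMap ∘ₗ
      (LinearMap.rTensor C (Coalgebra.counit : C →ₗ[k] k)) ∘ₗ ω = 0 ∧
    (TensorProduct.rid k C).toLinearMap ∘ₗ
      (LinearMap.lTensor C (Coalgebra.counit : C →ₗ[k] k)) ∘ₗ ω = 0 := by
  have hcoC : (TensorProduct.assoc k C C C).toLinearMap ∘ₗ
      LinearMap.rTensor C (Coalgebra.comul : C →ₗ[k] C ⊗[k] C) ∘ₗ
      (Coalgebra.comul : C →ₗ[k] C ⊗[k] C) =
      LinearMap.lTensor C (Coalgebra.comul : C →ₗ[k] C ⊗[k] C) ∘ₗ Coalgebra.comul :=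
    Coalgebra.coassoc
  have hcoT : (TensorProduct.assoc k Ct Ct Ct).toLinearMap ∘ₗ
      LinearMap.rTensor Ct (Coalgebra.comul : Ct →ₗ[k] Ct ⊗[k] Ct) ∘ₗ
      (Coalgebra.comul : Ct →ₗ[k] Ct ⊗[k] Ct) =
      LinearMap.lTensor Ct (Coalgebra.comul : Ct →ₗ[k] Ct ⊗[k] Ct) ∘ₗ Coalgebra.comul :=
    Coalgebra.coassoc
  have hA : (LinearMap.lTensor C ω ∘ₗ ρl) ∘ₗ (LinearMap.range ι.toLinearMap).mkQ =
      TensorProduct.map lam (TensorProduct.map lam lam) ∘ₗ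
        LinearMap.lTensor Ct (Coalgebra.comul : Ct →ₗ[k] Ct ⊗[k] Ct) ∘ₗ Coalgebra.comul
      - TensorProduct.map lam
          ((Coalgebra.comul : C →ₗ[k] C ⊗[k] C) ∘ₗ lam) ∘ₗ Coalgebra.comul := by
    rw [LinearMap.comp_assoc, hρl, ← LinearMap.comp_assoc]
    have : LinearMap.lTensor C ω ∘ₗ
        TensorProduct.map lam (LinearMap.range ι.toLinearMap).mkQ =
        TensorProduct.map lam (ω ∘ₗ (LinearMap.range ι.toLinearMap).mkQ) := by
      rw [LinearMap.lTensor_comp_map]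
    rw [this, hω, map_sub_right, LinearMap.sub_comp, ← LinearMap.map_comp_lTensor,
      LinearMap.comp_assoc]
  have hB : ((TensorProduct.assoc k C C C).toLinearMap ∘ₗ
        LinearMap.rTensor C (Coalgebra.comul : C →ₗ[k] C ⊗[k] C) ∘ₗ ω) ∘ₗ
        (LinearMap.range ι.toLinearMap).mkQ =
      (TensorProduct.assoc k C C C).toLinearMap ∘ₗ
        TensorProduct.map ((Coalgebra.comul : C →ₗ[k] C ⊗[k] C) ∘ₗ lam) lam ∘ₗ
        Coalgebra.comul
      - LinearMap.lTensor C (Coalgebra.comul : C →ₗ[k] C ⊗[k] C) ∘ₗ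
          (Coalgebra.comul : C →ₗ[k] C ⊗[k] C) ∘ₗ lam := by
    simp only [LinearMap.comp_assoc]
    rw [hω, LinearMap.comp_sub, LinearMap.comp_sub]
    congr 1
    · rw [← LinearMap.comp_assoc (Coalgebra.comul) (TensorProduct.map lam lam),
        LinearMap.rTensor_comp_map]
    · rw [← LinearMap.comp_assoc lam (Coalgebra.comul)
        (LinearMap.rTensor C (Coalgebra.comul : C →ₗ[k] C ⊗[k] C)),
        ← LinearMap.comp_assoc lam, hcoC, LinearMap.comp_assoc]
  have hD : (LinearMap.lTensor C (Coalgebra.comul : C →ₗ[k] C ⊗[k] C) ∘ₗ ω) ∘ₗ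
        (LinearMap.range ι.toLinearMap).mkQ =
      TensorProduct.map lam
          ((Coalgebra.comul : C →ₗ[k] C ⊗[k] C) ∘ₗ lam) ∘ₗ Coalgebra.comul
      - LinearMap.lTensor C (Coalgebra.comul : C →ₗ[k] C ⊗[k] C) ∘ₗ
          (Coalgebra.comul : C →ₗ[k] C ⊗[k] C) ∘ₗ lam := by
    rw [LinearMap.comp_assoc, hω, LinearMap.comp_sub]
    congr 1
    · rw [← LinearMap.comp_assoc, LinearMap.lTensor_comp_map]
  have hE : ((TensorProduct.assoc k C C C).toLinearMap ∘ₗ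
        LinearMap.rTensor C ω ∘ₗ ρr) ∘ₗ (LinearMap.range ι.toLinearMap).mkQ =
      TensorProduct.map lam (TensorProduct.map lam lam) ∘ₗ
        LinearMap.lTensor Ct (Coalgebra.comul : Ct →ₗ[k] Ct ⊗[k] Ct) ∘ₗ Coalgebra.comul
      - (TensorProduct.assoc k C C C).toLinearMap ∘ₗ
          TensorProduct.map ((Coalgebra.comul : C →ₗ[k] C ⊗[k] C) ∘ₗ lam) lam ∘ₗ
          Coalgebra.comul := by
    simp only [LinearMap.comp_assoc]
    rw [hρr, ← LinearMap.comp_assoc (Coalgebra.comul)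
      (TensorProduct.map (LinearMap.range ι.toLinearMap).mkQ lam) (LinearMap.rTensor C ω)]
    have : LinearMap.rTensor C ω ∘ₗ
        TensorProduct.map (LinearMap.range ι.toLinearMap).mkQ lam =
        TensorProduct.map (ω ∘ₗ (LinearMap.range ι.toLinearMap).mkQ) lam := by
      rw [LinearMap.rTensor_comp_map]
    rw [this, hω, map_sub_left, LinearMap.sub_comp, LinearMap.comp_sub]
    congr 1
    · rw [← LinearMap.map_comp_rTensor,
        LinearMap.comp_assoc (Coalgebra.comul : Ct →ₗ[k] Ct ⊗[k] Ct)
          (LinearMap.rTensor Ct (Coalgebra.comul : Ct →ₗ[k] Ct ⊗[k] Ct))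
          (TensorProduct.map (TensorProduct.map lam lam) lam),
        ← LinearMap.comp_assoc
          (LinearMap.rTensor Ct (Coalgebra.comul : Ct →ₗ[k] Ct ⊗[k] Ct) ∘ₗ Coalgebra.comul)
          (TensorProduct.map (TensorProduct.map lam lam) lam)
          (TensorProduct.assoc k C C C).toLinearMap,
        ← TensorProduct.map_map_comp_assoc_eq, LinearMap.comp_assoc, hcoT]
  refine ⟨?_, ?_, ?_⟩
  · apply Submodule.linearMap_qext
    simp only [LinearMap.sub_comp, LinearMap.add_comp, LinearMap.zero_comp]
    rw [hA, hB, hD, hE]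
    abel
  · apply Submodule.linearMap_qext
    have h1 : LinearMap.rTensor C (Coalgebra.counit : C →ₗ[k] k)
        ∘ₗ TensorProduct.map lam lam
        = LinearMap.lTensor k lam ∘ₗ
          LinearMap.rTensor Ct (Coalgebra.counit : Ct →ₗ[k] k) := by
      rw [LinearMap.rTensor_comp_map, LinearMap.lTensor_comp_rTensor, hnorm]
    simp only [LinearMap.comp_assoc]
    rw [hω, LinearMap.comp_sub, LinearMap.comp_sub,
      ← LinearMap.comp_assoc (Coalgebra.comul : Ct →ₗ[k] Ct ⊗[k] Ct)
        (TensorProduct.map lam lam)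
        (LinearMap.rTensor C (Coalgebra.counit : C →ₗ[k] k)), h1,
      LinearMap.comp_assoc, Coalgebra.rTensor_counit_comp_comul,
      ← LinearMap.comp_assoc lam (Coalgebra.comul : C →ₗ[k] C ⊗[k] C)
        (LinearMap.rTensor C (Coalgebra.counit : C →ₗ[k] k)),
      Coalgebra.rTensor_counit_comp_comul,
      ← LinearMap.comp_assoc (TensorProduct.mk k k Ct 1)
        (LinearMap.lTensor k lam) (TensorProduct.lid k C).toLinearMap,
      lid_nat, LinearMap.comp_assoc,
      ← LinearMap.comp_assoc lam (TensorProduct.mk k k C 1)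
        (TensorProduct.lid k C).toLinearMap]
    rw [show ((TensorProduct.lid k C).toLinearMap ∘ₗ TensorProduct.mk k k C 1)
        = LinearMap.id from lid_mk,
      show ((TensorProduct.lid k Ct).toLinearMap ∘ₗ TensorProduct.mk k k Ct 1)
        = LinearMap.id from lid_mk]
    simp
    exact (LinearMap.zero_comp _).symm
  · apply Submodule.linearMap_qext
    have h1 : LinearMap.lTensor C (Coalgebra.counit : C →ₗ[k] k)
        ∘ₗ TensorProduct.map lam lam
        = LinearMap.rTensor k lam ∘ₗ
          LinearMap.lTensor Ct (Coalgebra.counit : Ct →ₗ[k] k) := by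
      rw [LinearMap.lTensor_comp_map, hnorm, LinearMap.rTensor_comp_lTensor]
    simp only [LinearMap.comp_assoc]
    rw [hω, LinearMap.comp_sub, LinearMap.comp_sub,
      ← LinearMap.comp_assoc (Coalgebra.comul : Ct →ₗ[k] Ct ⊗[k] Ct)
        (TensorProduct.map lam lam)
        (LinearMap.lTensor C (Coalgebra.counit : C →ₗ[k] k)), h1,
      LinearMap.comp_assoc, Coalgebra.lTensor_counit_comp_comul,
      ← LinearMap.comp_assoc lam (Coalgebra.comul : C →ₗ[k] C ⊗[k] C)
        (LinearMap.lTensor C (Coalgebra.counit : C →ₗ[k] k)),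
      Coalgebra.lTensor_counit_comp_comul,
      ← LinearMap.comp_assoc ((TensorProduct.mk k Ct k).flip 1)
        (LinearMap.rTensor k lam) (TensorProduct.rid k C).toLinearMap,
      rid_nat, LinearMap.comp_assoc,
      ← LinearMap.comp_assoc lam ((TensorProduct.mk k C k).flip 1)
        (TensorProduct.rid k C).toLinearMap]
    rw [show ((TensorProduct.rid k C).toLinearMap ∘ₗ (TensorProduct.mk k C k).flip 1)
        = LinearMap.id from rid_mk,
      show ((TensorProduct.rid k Ct).toLinearMap ∘ₗ (TensorProduct.mk k Ct k).flip 1)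
        = LinearMap.id from rid_mk]
    simp
    exact (LinearMap.zero_comp _).symm
end
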